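/- Let X be a uniformly locally bounded space and G a subgroup of Autulb(X). If the uniform structure admits a basis of G-invariant entourages and the bornology admits a basis of G-invariant bounded sets, then G (with the topology of uniform biconvergence on bounded sets) is SIN: it has a basis of conjugation-invariant identity neighborhoods. -/

import Mathlib

open Filter Set UniformConvergence

/-- A bornology on `X` (paper's convention): contains singletons, closed under
subsets, and under unions of two intersecting members. -/
structure IsBornology (X : Type*) (𝔅 : Set (Set X)) : Prop where
  singleton_mem : ∀ x : X, {x} ∈ 𝔅
  mem_of_subset : ∀ A ∈ 𝔅, ∀ B : Set X, B ⊆ A → B ∈ 𝔅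
  union_mem : ∀ A ∈ 𝔅, ∀ B ∈ 𝔅, (A ∩ B).Nonempty → A ∪ B ∈ 𝔅

/-- The image `E[A] = {y | ∃ x ∈ A, (x, y) ∈ E}` of a set under an entourage. -/
def entImage {X : Type*} (E : Set (X × X)) (A : Set X) : Set X :=
  {y | ∃ x ∈ A, (x, y) ∈ E}

/-- A uniformly locally bounded space: a uniform space with a bornology admitting
a bounded uniform entourage `E` (i.e. `E[B]` is bounded for every bounded `B`). -/
structure IsULB (X : Type*) [UniformSpace X] (𝔅 : Set (Set X)) : Prop where
  born : IsBornology X 𝔅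
  bounded_entourage : ∃ E ∈ uniformity X, ∀ A ∈ 𝔅, entImage E A ∈ 𝔅

/-- An endomorphism of a uniformly locally bounded space: uniformly continuous on
every bounded set, and modest (sends bounded sets to bounded sets). -/
def IsEndo {X : Type*} [UniformSpace X] (𝔅 : Set (Set X)) (f : X → X) : Prop :=
  (∀ A ∈ 𝔅, UniformContinuous fun x : A => f x) ∧ ∀ A ∈ 𝔅, f '' A ∈ 𝔅

theorem IsEndo.comp {X : Type*} [UniformSpace X] {𝔅 : Set (Set X)} {f g : X → X}
    (hf : IsEndo 𝔅 f) (hg : IsEndo 𝔅 g) : IsEndo 𝔅 (f ∘ g) := by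
  refine ⟨fun A hA => ?_, fun A hA => ?_⟩
  · have h1 : UniformContinuous fun x : A =>
        (⟨g x, Set.mem_image_of_mem g x.2⟩ : g '' A) :=
      (hg.1 A hA).subtype_mk _
    exact (hf.1 (g '' A) (hg.2 A hA)).comp h1
  · rw [Set.image_comp]
    exact hf.2 _ (hg.2 A hA)

theorem isEndo_id {X : Type*} [UniformSpace X] {𝔅 : Set (Set X)} : IsEndo 𝔅 (id : X → X) :=
  ⟨fun _ _ => uniformContinuous_subtype_val, fun A hA => by simpa using hA⟩

/-- The group of automorphisms of a uniformly locally bounded space: bijections `g`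
such that `g` and `g⁻¹` are both modest and uniformly continuous on bounded sets. -/
def ulbAut (X : Type*) [UniformSpace X] (𝔅 : Set (Set X)) : Subgroup (Equiv.Perm X) where
  carrier := {g | IsEndo 𝔅 ⇑g ∧ IsEndo 𝔅 ⇑g.symm}
  one_mem' := ⟨isEndo_id, isEndo_id⟩
  mul_mem' := fun {a b} ha hb => ⟨ha.1.comp hb.1, hb.2.comp ha.2⟩
  inv_mem' := fun {a} ha => ⟨ha.2, ha.1⟩

/-- The uniform structure of uniform biconvergence on bounded sets on `ulbAut X 𝔅`:
the one induced by `g ↦ (g, g⁻¹)` into `(X →ᵤ[𝔅] X) × (X →ᵤ[𝔅] X)`. -/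
instance ulbAutUniformSpace (X : Type*) [UniformSpace X] (𝔅 : Set (Set X)) :
    UniformSpace ↥(ulbAut X 𝔅) :=
  UniformSpace.comap
    (fun g => (UniformOnFun.ofFun 𝔅 ⇑g.1, UniformOnFun.ofFun 𝔅 ⇑g.1.symm))
    inferInstance


section SINAux

open Topology
open scoped Uniformity

variable {X : Type*} [UniformSpace X] {𝔅 : Set (Set X)}

private def sinMap (G : Subgroup ↥(ulbAut X 𝔅)) (g : ↥G) :
    (X →ᵤ[𝔅] X) × (X →ᵤ[𝔅] X) :=
  (UniformOnFun.ofFun 𝔅 ⇑g.1.1, UniformOnFun.ofFun 𝔅 ⇑g.1.1.symm)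

private theorem sinMap_one (G : Subgroup ↥(ulbAut X 𝔅)) :
    sinMap G 1 = (UniformOnFun.ofFun 𝔅 (id : X → X), UniformOnFun.ofFun 𝔅 (id : X → X)) := by
  simp [sinMap]
  rfl

private theorem sin_nhds_one (G : Subgroup ↥(ulbAut X 𝔅)) :
    nhds (1 : ↥G) = Filter.comap (sinMap G)
      (nhds (UniformOnFun.ofFun 𝔅 (id : X → X), UniformOnFun.ofFun 𝔅 (id : X → X))) := by
  rw [← sinMap_one G, nhds_eq_comap_uniformity, nhds_eq_comap_uniformity]
  have h1 : 𝓤 ↥G = Filter.comap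
      (fun p : ↥G × ↥G => (sinMap G p.1, sinMap G p.2))
      (𝓤 ((X →ᵤ[𝔅] X) × (X →ᵤ[𝔅] X))) := by
    change Filter.comap _ (Filter.comap _ _) = _
    rw [Filter.comap_comap]
    rfl
  rw [h1, Filter.comap_comap, Filter.comap_comap]
  rfl

private def sinSet (G : Subgroup ↥(ulbAut X 𝔅)) (A : Set X) (E : Set (X × X)) : Set ↥G :=
  {g | (∀ x ∈ A, (x, g.1.1 x) ∈ E) ∧ ∀ x ∈ A, (x, g.1.1.symm x) ∈ E}

private theorem sinSet_mem_nhds (G : Subgroup ↥(ulbAut X 𝔅)) {A : Set X} (hA : A ∈ 𝔅)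
    {E : Set (X × X)} (hE : E ∈ 𝓤 X) : sinSet G A E ∈ nhds (1 : ↥G) := by
  rw [sin_nhds_one]
  refine Filter.mem_comap.2 ⟨_, prod_mem_nhds
    (UniformOnFun.gen_mem_nhds X 𝔅 (UniformOnFun.ofFun 𝔅 (id : X → X)) hA hE)
    (UniformOnFun.gen_mem_nhds X 𝔅 (UniformOnFun.ofFun 𝔅 (id : X → X)) hA hE), ?_⟩
  intro g hg
  exact ⟨fun x hx => hg.1 x hx, fun x hx => hg.2 x hx⟩

private theorem mem_nhds_ofFun_id {T : Set (X →ᵤ[𝔅] X)}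
    (hT : T ∈ nhds (UniformOnFun.ofFun 𝔅 (id : X → X))) :
    ∃ t : Set (Set X), t.Finite ∧ t ⊆ 𝔅 ∧ ∃ E ∈ 𝓤 X,
      {g : X →ᵤ[𝔅] X | ∀ A ∈ t, ∀ x ∈ A, (x, UniformOnFun.toFun 𝔅 g x) ∈ E} ⊆ T := by
  rw [UniformOnFun.nhds_eq, iInf_subtype'] at hT
  obtain ⟨I, hIfin, V, hV, rfl⟩ := Filter.mem_iInf.1 hT
  have key : ∀ i : I, ∃ W ∈ 𝓤 X,
      {g : X →ᵤ[𝔅] X | ∀ x ∈ ((i : ↥𝔅) : Set X),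
        (UniformOnFun.toFun 𝔅 (UniformOnFun.ofFun 𝔅 (id : X → X)) x,
          UniformOnFun.toFun 𝔅 g x) ∈ W} ⊆ V i := by
    intro i
    have hdir : DirectedOn ((fun W : Set (X × X) =>
        (Filter.principal {g : X →ᵤ[𝔅] X | ∀ x ∈ ((i : ↥𝔅) : Set X),
          (UniformOnFun.toFun 𝔅 (UniformOnFun.ofFun 𝔅 (id : X → X)) x,
            UniformOnFun.toFun 𝔅 g x) ∈ W})) ⁻¹'o (· ≥ ·)) {W | W ∈ 𝓤 X} := by
      intro W₁ h₁ W₂ h₂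
      exact ⟨W₁ ∩ W₂, Filter.inter_mem h₁ h₂,
        Filter.principal_mono.2 fun g hg x hx => (hg x hx).1,
        Filter.principal_mono.2 fun g hg x hx => (hg x hx).2⟩
    obtain ⟨W, hW, hWV⟩ :=
      (Filter.mem_biInf_of_directed hdir ⟨univ, Filter.univ_mem⟩).1 (hV i)
    exact ⟨W, hW, Filter.mem_principal.1 hWV⟩
  choose W hWmem hWsub using key
  haveI : Finite I := hIfin.to_subtype
  refine ⟨Subtype.val '' I, hIfin.image _, ?_, ⋂ i, W i, Filter.iInter_mem.2 hWmem, ?_⟩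
  · rintro _ ⟨i, _, rfl⟩
    exact i.2
  · intro g hg
    refine mem_iInter.2 fun i => hWsub i fun x hx => ?_
    have hA : ((i : ↥𝔅) : Set X) ∈ Subtype.val '' I := ⟨i, i.2, rfl⟩
    exact iInter_subset W i (hg _ hA x hx)

private theorem exists_sin_basic (G : Subgroup ↥(ulbAut X 𝔅)) {U : Set ↥G}
    (hUm : U ∈ nhds (1 : ↥G)) :
    ∃ t : Set (Set X), t.Finite ∧ t ⊆ 𝔅 ∧ ∃ E ∈ 𝓤 X,
      {g : ↥G | ∀ A ∈ t, ∀ x ∈ A, (x, g.1.1 x) ∈ E ∧ (x, g.1.1.symm x) ∈ E} ⊆ U := by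
  rw [sin_nhds_one] at hUm
  obtain ⟨T, hT, hTU⟩ := Filter.mem_comap.1 hUm
  rw [nhds_prod_eq] at hT
  obtain ⟨T₁, hT₁, T₂, hT₂, hsub⟩ := Filter.mem_prod_iff.1 hT
  obtain ⟨t₁, h1f, h1b, E₁, hE₁, h1⟩ := mem_nhds_ofFun_id hT₁
  obtain ⟨t₂, h2f, h2b, E₂, hE₂, h2⟩ := mem_nhds_ofFun_id hT₂
  refine ⟨t₁ ∪ t₂, h1f.union h2f, union_subset h1b h2b, E₁ ∩ E₂,
    Filter.inter_mem hE₁ hE₂, ?_⟩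
  intro g hg
  apply hTU
  apply hsub
  constructor
  · exact h1 fun A hA x hx => ((hg A (mem_union_left _ hA) x hx).1).1
  · exact h2 fun A hA x hx => ((hg A (mem_union_right _ hA) x hx).2).2

private theorem conj_mem_sinSet {G : Subgroup ↥(ulbAut X 𝔅)} {B : Set X} {F : Set (X × X)}
    (hBinv : ∀ g ∈ G, (g.1 : X → X) '' B = B)
    (hFinv : ∀ g ∈ G, (fun p : X × X => ((g.1 : X → X) p.1, (g.1 : X → X) p.2)) '' F = F)
    (g : ↥G) {k : ↥G} (hk : k ∈ sinSet G B F) : g * k * g⁻¹ ∈ sinSet G B F := by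
  have hact : ∀ x : X, ((g * k * g⁻¹ : ↥G) : ↥(ulbAut X 𝔅)).1 x
      = g.1.1 (k.1.1 (g.1.1.symm x)) := by
    intro x
    simp [Equiv.Perm.mul_apply, Equiv.Perm.inv_def]
  have hsymm : ∀ x : X, (((g * k * g⁻¹ : ↥G) : ↥(ulbAut X 𝔅)).1).symm x
      = g.1.1 (k.1.1.symm (g.1.1.symm x)) := by
    intro x
    simp [← Equiv.Perm.inv_def, mul_inv_rev, Equiv.Perm.mul_apply]
  have hy : ∀ x ∈ B, g.1.1.symm x ∈ B := by
    intro x hx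
    have h := hBinv g.1⁻¹ (inv_mem g.2)
    rw [← h]
    exact Set.mem_image_of_mem _ hx
  constructor
  · intro x hx
    rw [hact]
    have hmem : (g.1.1 (g.1.1.symm x), g.1.1 (k.1.1 (g.1.1.symm x))) ∈ F := by
      rw [← hFinv g.1 g.2]
      exact ⟨(g.1.1.symm x, k.1.1 (g.1.1.symm x)), hk.1 _ (hy x hx), rfl⟩
    simpa using hmem
  · intro x hx
    rw [hsymm]
    have hmem : (g.1.1 (g.1.1.symm x), g.1.1 (k.1.1.symm (g.1.1.symm x))) ∈ F := by
      rw [← hFinv g.1 g.2]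
      exact ⟨(g.1.1.symm x, k.1.1.symm (g.1.1.symm x)), hk.2 _ (hy x hx), rfl⟩
    simpa using hmem

end SINAux

/-- If a subgroup `G` of `ulbAut X 𝔅` is such that the uniform structure admits a
basis of `G`-invariant entourages and the bornology a basis of `G`-invariant
bounded sets, then `G` is SIN: it admits a basis of conjugation-invariant identity
neighborhoods. -/
theorem ulbAut_subgroup_SIN {X : Type*} [UniformSpace X] {𝔅 : Set (Set X)}
    (h : IsULB X 𝔅) (G : Subgroup ↥(ulbAut X 𝔅))
    (hU : ∀ E ∈ uniformity X, ∃ F ∈ uniformity X, F ⊆ E ∧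
      ∀ g ∈ G, (fun p : X × X => ((g.1 : X → X) p.1, (g.1 : X → X) p.2)) '' F = F)
    (hB : ∀ A ∈ 𝔅, ∃ B ∈ 𝔅, A ⊆ B ∧ ∀ g ∈ G, (g.1 : X → X) '' B = B) :
    ∀ U ∈ nhds (1 : ↥G), ∃ V ∈ nhds (1 : ↥G), V ⊆ U ∧
      ∀ g : ↥G, (fun k => g * k * g⁻¹) '' V = V := by
  intro U hUm
  obtain ⟨t, htf, htb, E, hE, hsub⟩ := exists_sin_basic G hUm
  obtain ⟨F, hF, hFE, hFinv⟩ := hU E hE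
  choose! B hB1 hB2 hB3 using hB
  refine ⟨⋂ A ∈ t, sinSet G (B A) F, ?_, ?_, ?_⟩
  · exact (Filter.biInter_mem htf).2 fun A hA => sinSet_mem_nhds G (hB1 A (htb hA)) hF
  · intro g hg
    apply hsub
    intro A hA x hx
    have hg' := Set.mem_iInter₂.1 hg A hA
    exact ⟨hFE (hg'.1 x (hB2 A (htb hA) hx)), hFE (hg'.2 x (hB2 A (htb hA) hx))⟩
  · intro g
    have key : ∀ (g : ↥G), ∀ k ∈ ⋂ A ∈ t, sinSet G (B A) F,
        g * k * g⁻¹ ∈ ⋂ A ∈ t, sinSet G (B A) F := fun g k hk =>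
      Set.mem_iInter₂.2 fun A hA =>
        conj_mem_sinSet (hB3 A (htb hA)) hFinv g (Set.mem_iInter₂.1 hk A hA)
    ext k
    constructor
    · rintro ⟨m, hm, rfl⟩
      exact key g m hm
    · intro hk
      refine ⟨g⁻¹ * k * g⁻¹⁻¹, key g⁻¹ k hk, ?_⟩
      group
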